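/- Let f : M³ → Q⁴_ε × ℝ be biconservative with nonzero parallel H and dim E_0(H) = 2, with adapted frame X₁ = T/‖T‖, X₂ spanning E_0(H) and X₃ ⊥ E_0(H). Then the Levi-Civita connection satisfies ∇_{X₁}X₁ = φ₁X₂, ∇_{X₁}X₂ = −φ₁X₁, ∇_{X₂}X₁ = φ₂X₂, ∇_{X₂}X₂ = −φ₂X₁, and ∇_{X_i}X₃ = 0, ∇_{X₃}X_j = 0 for all i, j; in particular the integral curves of X₃ are geodesics of M³. -/
import Mathlib


open scoped BigOperators

/-! Abstract model of an isometric immersion `f : M^m → Q^n_ε × ℝ ⊂ E^{n+2}`,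
where `Q^n_ε` is the unit sphere (`ε = 1`) or hyperbolic space (`ε = -1`) and
`E^{n+2}` is Euclidean or Lorentzian space.  Here `R` plays the role of the ring
of smooth functions on `M`, `TM` of the tangent vector fields of `M`, `NM` of
the normal vector fields along `f` (normal inside `T(Q^n_ε × ℝ)`), and `AM` of
the vector fields along `f` with values in `E^{n+2}`. -/

/-- The curvature tensor of the product `Q^n_ε × ℝ`:
`R̃(Z,W)V = ε (⟨W',V'⟩ Z' - ⟨Z',V'⟩ W')`, where `Z' = Z - ⟨Z,∂t⟩ ∂t` is the
component of `Z` tangent to the `Q^n_ε`-factor. -/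
def prodCurv {R AM : Type*} [CommRing R] [Algebra ℝ R] [AddCommGroup AM] [Module R AM]
    (ε : ℝ) (g : AM →ₗ[R] AM →ₗ[R] R) (dt : AM) (Z W V : AM) : AM :=
  algebraMap ℝ R ε •
    ((g W V - g W dt * g V dt) • (Z - g Z dt • dt)
      - (g Z V - g Z dt * g V dt) • (W - g W dt • dt))

structure Setup (ε : ℝ) (m : ℕ) (R : Type*) [CommRing R] [Algebra ℝ R]
    (TM NM AM : Type*) [AddCommGroup TM] [Module R TM]
    [AddCommGroup NM] [Module R NM] [AddCommGroup AM] [Module R AM] : Type _ where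
  /-- the differential of `f` -/
  ι : TM →ₗ[R] AM
  /-- the inclusion of the normal bundle -/
  ν : NM →ₗ[R] AM
  /-- tangential projection -/
  tanPr : AM →ₗ[R] TM
  /-- normal projection -/
  norPr : AM →ₗ[R] NM
  split : ∀ Z, ι (tanPr Z) + ν (norPr Z) = Z
  tan_ι : ∀ X, tanPr (ι X) = X
  nor_ν : ∀ ξ, norPr (ν ξ) = ξ
  nor_ι : ∀ X, norPr (ι X) = 0
  tan_ν : ∀ ξ, tanPr (ν ξ) = 0
  /-- the (possibly Lorentzian) metric of `E^{n+2}` along `f` -/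
  g : AM →ₗ[R] AM →ₗ[R] R
  g_symm : ∀ Z W, g Z W = g W Z
  g_tan_nor : ∀ X ξ, g (ι X) (ν ξ) = 0
  /-- the action of a tangent vector field on a function -/
  act : TM → R → R
  act_add : ∀ X a b, act X (a + b) = act X a + act X b
  act_mul : ∀ X a b, act X (a * b) = a * act X b + b * act X a
  act_const : ∀ X (r : ℝ), act X (algebraMap ℝ R r) = 0
  /-- the Lie bracket of vector fields on `M` -/
  bracket : TM → TM → TM
  /-- the Levi-Civita connection of `Q^n_ε × ℝ` along `f` -/
  D : TM → AM → AM
  D_add : ∀ X Z W, D X (Z + W) = D X Z + D X W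
  D_smul : ∀ X (a : R) Z, D X (a • Z) = act X a • Z + a • D X Z
  /-- the Levi-Civita connection of `M` -/
  conn : TM → TM → TM
  conn_add : ∀ X Y Z, conn X (Y + Z) = conn X Y + conn X Z
  conn_smul : ∀ X (a : R) Y, conn X (a • Y) = act X a • Y + a • conn X Y
  /-- the normal connection `∇^⊥` -/
  nconn : TM → NM → NM
  nconn_add : ∀ X ξ ζ, nconn X (ξ + ζ) = nconn X ξ + nconn X ζ
  nconn_smul : ∀ X (a : R) ξ, nconn X (a • ξ) = act X a • ξ + a • nconn X ξ
  /-- the second fundamental form `α_f` -/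
  alpha : TM →ₗ[R] TM →ₗ[R] NM
  alpha_symm : ∀ X Y, alpha X Y = alpha Y X
  /-- the shape operators `A_ξ` -/
  A : NM →ₗ[R] TM →ₗ[R] TM
  shape : ∀ ξ X Y, g (ι (A ξ X)) (ι Y) = g (ν (alpha X Y)) (ν ξ)
  /-- the Gauss formula -/
  gauss : ∀ X Y, D X (ι Y) = ι (conn X Y) + ν (alpha X Y)
  /-- the Weingarten formula -/
  weingarten : ∀ X ξ, D X (ν ξ) = - ι (A ξ X) + ν (nconn X ξ)
  metric : ∀ X Z W, act X (g Z W) = g (D X Z) W + g Z (D X W)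
  torsion : ∀ X Y, conn X Y - conn Y X = bracket X Y
  /-- the Codazzi equation in `Q^n_ε × ℝ` -/
  codazzi : ∀ X Y Z,
    (nconn X (alpha Y Z) - alpha (conn X Y) Z - alpha Y (conn X Z))
      - (nconn Y (alpha X Z) - alpha (conn Y X) Z - alpha X (conn Y Z))
      = norPr (prodCurv ε g dt (ι X) (ι Y) (ι Z))
  /-- the Ricci equation in `Q^n_ε × ℝ` -/
  ricci : ∀ X Y ξ,
    nconn X (nconn Y ξ) - nconn Y (nconn X ξ) - nconn (bracket X Y) ξ
      = norPr (prodCurv ε g dt (ι X) (ι Y) (ν ξ))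
        + alpha X (A ξ Y) - alpha (A ξ X) Y
  /-- the unit vector field tangent to the `ℝ`-factor -/
  dt : AM
  dt_parallel : ∀ X, D X dt = 0
  dt_unit : g dt dt = 1
  /-- the position vector field, i.e. `f` itself, regarded in `E^{n+2}` -/
  pos : AM
  /-- the flat connection `∇̂` of `E^{n+2}` along `f` -/
  Dhat : TM → AM → AM
  Dhat_add : ∀ X Z W, Dhat X (Z + W) = Dhat X Z + Dhat X W
  Dhat_smul : ∀ X (a : R) Z, Dhat X (a • Z) = act X a • Z + a • Dhat X Z
  Dhat_pos : ∀ X, Dhat X pos = ι X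
  Dhat_dt : ∀ X, Dhat X dt = 0
  Dhat_metric : ∀ X Z W, act X (g Z W) = g (Dhat X Z) W + g Z (Dhat X W)
  /-- relation between `∇̂` and the connection of `Q^n_ε × ℝ` via the second
  fundamental form of the inclusion `Q^n_ε × ℝ ⊂ E^{n+2}` -/
  Dhat_ι : ∀ X Y, Dhat X (ι Y) = D X (ι Y)
    - (algebraMap ℝ R ε * (g (ι X) (ι Y) - g (ι X) dt * g (ι Y) dt)) •
        (pos - g pos dt • dt)
  Dhat_ν : ∀ X ξ, Dhat X (ν ξ) = D X (ν ξ)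
    - (algebraMap ℝ R ε * (g (ι X) (ν ξ) - g (ι X) dt * g (ν ξ) dt)) •
        (pos - g pos dt • dt)
  /-- `f` takes values in `Q^n_ε × ℝ` -/
  pos_norm : g (pos - g pos dt • dt) (pos - g pos dt • dt) = algebraMap ℝ R ε

namespace Setup

variable {ε : ℝ} {m : ℕ} {R TM NM AM : Type*} [CommRing R] [Algebra ℝ R]
  [AddCommGroup TM] [Module R TM] [AddCommGroup NM] [Module R NM]
  [AddCommGroup AM] [Module R AM]

variable (S : Setup ε m R TM NM AM)

/-- the tangent part `T` of `∂t`, so that `∂t = f_* T + η` -/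
def T : TM := S.tanPr S.dt

/-- the normal part `η` of `∂t`, so that `∂t = f_* T + η` -/
def eta : NM := S.norPr S.dt

/-- the induced metric on `M` -/
def gT (X Y : TM) : R := S.g (S.ι X) (S.ι Y)

/-- the metric of the normal bundle -/
def gN (ξ ζ : NM) : R := S.g (S.ν ξ) (S.ν ζ)

/-- the curvature tensor `R̃` of `Q^n_ε × ℝ` along `f` -/
def Rcurv (Z W V : AM) : AM := prodCurv ε S.g S.dt Z W V

/-- `e` is a (local) orthonormal tangent frame of `M` -/
def IsONFrame (e : Fin m → TM) : Prop :=
  (∀ i j, S.gT (e i) (e j) = if i = j then 1 else 0) ∧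
  (∀ X : TM, X = ∑ i, S.gT X (e i) • e i)

/-- `H` is the mean curvature vector field: `m H = trace α_f` -/
def IsMeanCurv (e : Fin m → TM) (H : NM) : Prop :=
  (m : R) • H = ∑ i, S.alpha (e i) (e i)

/-- `H` is parallel in the normal bundle -/
def IsParallelN (H : NM) : Prop := ∀ X, S.nconn X H = 0

/-- `f` is biconservative: the tangent part of the bitension field vanishes,
i.e. `m grad‖H‖² + 4 trace A_{∇^⊥H} + 4 trace (R̃(·,H)·)^T = 0` (paired with an
arbitrary tangent field `Y`, which expresses the gradient term weakly). -/
def Biconservative (e : Fin m → TM) (H : NM) : Prop :=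
  ∀ Y : TM,
    (m : R) * S.act Y (S.gN H H)
      + 4 * (∑ i, S.gT (S.A (S.nconn (e i) H) (e i)) Y)
      + 4 * (∑ i, S.gT (S.tanPr (S.Rcurv (S.ι (e i)) (S.ν H) (S.ι (e i)))) Y) = 0

/-- the normal part of the bitension field vanishes:
`trace α_f(A_H ·, ·) - Δ^⊥ H + 2 trace (R̃(·,H)·)^⊥ = 0` -/
def NormalBitensionZero (e : Fin m → TM) (H : NM) : Prop :=
  (∑ i, S.alpha (S.A H (e i)) (e i))
    - (∑ i, (S.nconn (e i) (S.nconn (e i) H) - S.nconn (S.conn (e i) (e i)) H))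
    + 2 • (∑ i, S.norPr (S.Rcurv (S.ι (e i)) (S.ν H) (S.ι (e i)))) = 0

/-- `f` is biharmonic: the full bitension field vanishes. -/
def Biharmonic (e : Fin m → TM) (H : NM) : Prop :=
  S.Biconservative e H ∧ S.NormalBitensionZero e H

/-- a vector field is nowhere vanishing (in the function-ring model: it is not
annihilated by any nonzero function) -/
def NowhereZero (_S₀ : Setup ε m R TM NM AM) (X : TM) : Prop :=
  ∀ a : R, a • X = 0 → a = 0

/-- a normal field is nowhere vanishing -/
def NowhereZeroN (_S₀ : Setup ε m R TM NM AM) (ξ : NM) : Prop :=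
  ∀ a : R, a • ξ = 0 → a = 0

/-- `f` belongs to the class `𝒜`: `T` is an eigenvector of every shape
operator of `f` -/
def ClassA : Prop := ∀ ξ : NM, ∃ r : R, S.A ξ S.T = r • S.T

end Setup

/-- The symmetric bilinear form of `E⁶` (Euclidean for `ε = 1`, Lorentzian for
`ε = -1`), the last coordinate corresponding to the `ℝ`-factor of `Q⁴_ε × ℝ`. -/
def bform (ε : ℝ) (v w : Fin 6 → ℝ) : ℝ :=
  v 0 * w 0 + v 1 * w 1 + v 2 * w 2 + v 3 * w 3 + ε * (v 4 * w 4) + v 5 * w 5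


/-- For `f : M³ → Q⁴_ε × ℝ` biconservative with nonzero parallel `H` and
`dim E_0(H) = 2`, in the adapted frame `X₁ = T/‖T‖, X₂, X₃` the Levi-Civita
connection satisfies the stated relations; in particular the integral curves of
`X₃` are geodesics. -/
theorem stmt_16 {ε : ℝ} (hε : ε = 1 ∨ ε = -1) {R TM NM AM : Type*}
    [CommRing R] [Algebra ℝ R] [AddCommGroup TM] [Module R TM]
    [AddCommGroup NM] [Module R NM] [AddCommGroup AM] [Module R AM]
    (S : Setup ε 3 R TM NM AM)
    (e : Fin 3 → TM) (he : S.IsONFrame e) (H : NM) (hH : S.IsMeanCurv e H)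
    (hpar : S.IsParallelN H) (hH0 : H ≠ 0) (hbic : S.Biconservative e H)
    (hE0 : ∀ X : TM, S.A H X = 0 ↔ ∃ c d : R, X = c • e 0 + d • e 1)
    (ξ₁ ξ₂ : NM) (nH nE : R) (hu1 : S.gN ξ₁ ξ₁ = 1) (hH1 : H = nH • ξ₁)
    (hu2 : S.gN ξ₂ ξ₂ = 1) (hetadec : S.eta = nE • ξ₂)
    (hspan : ∀ ζ : NM, ∃ r s : R, ζ = r • ξ₁ + s • ξ₂)
    (hT0 : ∃ t : R, S.T = t • e 0) (hT : S.NowhereZero S.T) :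
    ∃ φ₁ φ₂ : R,
      S.conn (e 0) (e 0) = φ₁ • e 1 ∧ S.conn (e 0) (e 1) = - (φ₁ • e 0) ∧
      S.conn (e 1) (e 0) = φ₂ • e 1 ∧ S.conn (e 1) (e 1) = - (φ₂ • e 0) ∧
      (∀ i : Fin 3, S.conn (e i) (e 2) = 0) ∧
      S.conn (e 2) (e 0) = 0 ∧ S.conn (e 2) (e 1) = 0 ∧
      S.conn (e 2) (e 2) = 0 := by
  classical
  obtain ⟨t, hTt⟩ := hT0
  -- basic bilinearity and metric helpers
  have gfold : ∀ X Y : TM, S.g (S.ι X) (S.ι Y) = S.gT X Y := fun _ _ => rfl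
  have gNfold : ∀ ξ ζ : NM, S.g (S.ν ξ) (S.ν ζ) = S.gN ξ ζ := fun _ _ => rfl
  have gιν : ∀ (X : TM) (ξ : NM), S.g (S.ι X) (S.ν ξ) = 0 := S.g_tan_nor
  have gνι : ∀ (ξ : NM) (X : TM), S.g (S.ν ξ) (S.ι X) = 0 := fun ξ X => by
    rw [S.g_symm]; exact S.g_tan_nor X ξ
  have gTsymm : ∀ X Y : TM, S.gT X Y = S.gT Y X := fun X Y => S.g_symm _ _
  have gNsymm : ∀ ξ ζ : NM, S.gN ξ ζ = S.gN ζ ξ := fun ξ ζ => S.g_symm _ _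
  have gTsmul : ∀ (a : R) (X Y : TM), S.gT (a • X) Y = a * S.gT X Y := by
    intro a X Y; simp [Setup.gT, map_smul, smul_eq_mul]
  have gTsmul' : ∀ (a : R) (X Y : TM), S.gT X (a • Y) = a * S.gT X Y := by
    intro a X Y; simp [Setup.gT, map_smul, smul_eq_mul]
  have gTadd : ∀ X Y Z : TM, S.gT (X + Y) Z = S.gT X Z + S.gT Y Z := by
    intro X Y Z; simp [Setup.gT, map_add]
  have gTsub : ∀ X Y Z : TM, S.gT (X - Y) Z = S.gT X Z - S.gT Y Z := by
    intro X Y Z; simp [Setup.gT, map_sub]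
  have gTzero : ∀ Y : TM, S.gT 0 Y = 0 := by intro Y; simp [Setup.gT]
  have gNsmul : ∀ (a : R) (ξ ζ : NM), S.gN (a • ξ) ζ = a * S.gN ξ ζ := by
    intro a ξ ζ; simp [Setup.gN, map_smul, smul_eq_mul]
  have gNadd : ∀ ξ ζ χ : NM, S.gN (ξ + ζ) χ = S.gN ξ χ + S.gN ζ χ := by
    intro ξ ζ χ; simp [Setup.gN, map_add]
  have gNsub : ∀ ξ ζ χ : NM, S.gN (ξ - ζ) χ = S.gN ξ χ - S.gN ζ χ := by
    intro ξ ζ χ; simp [Setup.gN, map_sub]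
  have gNzero : ∀ ζ : NM, S.gN 0 ζ = 0 := by intro ζ; simp [Setup.gN]
  have gNzero' : ∀ ζ : NM, S.gN ζ 0 = 0 := by intro ζ; simp [Setup.gN]
  have hdt : S.ι S.T + S.ν S.eta = S.dt := S.split S.dt
  have tpdt : S.tanPr S.dt = S.T := rfl
  have npdt : S.norPr S.dt = S.eta := rfl
  have gdtι : ∀ X : TM, S.g (S.ι X) S.dt = S.gT X S.T := by
    intro X; rw [← hdt]; simp [map_add, gιν, gfold]
  have gdtν : ∀ ξ : NM, S.g (S.ν ξ) S.dt = S.gN ξ S.eta := by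
    intro ξ; rw [← hdt]; simp [map_add, gνι, gNfold]
  have gNetaH : S.gN S.eta H = S.gN H S.eta := gNsymm _ _
  -- scalar cancellation helper
  have cancel : ∀ (r : ℝ) (a : R), r ≠ 0 → algebraMap ℝ R r * a = 0 → a = 0 := by
    intro r a hr h0
    have h2 : algebraMap ℝ R r⁻¹ * (algebraMap ℝ R r * a) = a := by
      rw [← mul_assoc, ← map_mul, inv_mul_cancel₀ hr, map_one, one_mul]
    rw [h0, mul_zero] at h2; exact h2.symm
  have act0 : ∀ X : TM, S.act X (0 : R) = 0 := by
    intro X; have := S.act_const X 0; simpa using this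
  -- metric compatibility of conn and nconn
  have mC : ∀ X Y Z : TM,
      S.act X (S.gT Y Z) = S.gT (S.conn X Y) Z + S.gT Y (S.conn X Z) := by
    intro X Y Z
    have hm := S.metric X (S.ι Y) (S.ι Z)
    rw [S.gauss, S.gauss] at hm
    simpa only [map_add, LinearMap.add_apply, gιν, gνι, add_zero, zero_add, gfold]
      using hm
  have mN : ∀ (X : TM) (ξ ζ : NM),
      S.act X (S.gN ξ ζ) = S.gN (S.nconn X ξ) ζ + S.gN ξ (S.nconn X ζ) := by
    intro X ξ ζ
    have hm := S.metric X (S.ν ξ) (S.ν ζ)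
    rw [S.weingarten, S.weingarten] at hm
    simpa only [map_add, map_neg, LinearMap.add_apply, LinearMap.neg_apply, gιν, gνι,
      neg_zero, zero_add, add_zero, gNfold] using hm
  have actFrame : ∀ (X : TM) (i j : Fin 3), S.act X (S.gT (e i) (e j)) = 0 := by
    intro X i j
    rw [he.1]
    by_cases hij : i = j
    · rw [if_pos hij, show (1 : R) = algebraMap ℝ R 1 from (map_one _).symm, S.act_const]
    · rw [if_neg hij]; exact act0 X
  have Γanti : ∀ i j kk : Fin 3,
      S.gT (S.conn (e i) (e j)) (e kk) = - S.gT (S.conn (e i) (e kk)) (e j) := by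
    intro i j kk
    have hm := mC (e i) (e j) (e kk)
    rw [actFrame, gTsymm (e j)] at hm
    linear_combination -hm
  have Γdiag : ∀ i j : Fin 3, S.gT (S.conn (e i) (e j)) (e j) = 0 := by
    intro i j
    have hm := Γanti i j j
    refine cancel 2 _ two_ne_zero ?_
    rw [map_ofNat]
    linear_combination hm
  have expand : ∀ X : TM,
      X = S.gT X (e 0) • e 0 + S.gT X (e 1) • e 1 + S.gT X (e 2) • e 2 := by
    intro X
    have hx := he.2 X
    rwa [Fin.sum_univ_three] at hx
  -- frame values
  have g00 : S.gT (e 0) (e 0) = 1 := by simp [he.1]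
  have g01 : S.gT (e 0) (e 1) = 0 := by simp [he.1]
  have g02 : S.gT (e 0) (e 2) = 0 := by simp [he.1]
  have g10 : S.gT (e 1) (e 0) = 0 := by simp [he.1]
  have g11 : S.gT (e 1) (e 1) = 1 := by simp [he.1]
  have g12 : S.gT (e 1) (e 2) = 0 := by simp [he.1]
  have g20 : S.gT (e 2) (e 0) = 0 := by simp [he.1]
  have g21 : S.gT (e 2) (e 1) = 0 := by simp [he.1]
  have g22 : S.gT (e 2) (e 2) = 1 := by simp [he.1]
  have gTT : ∀ X : TM, S.gT X S.T = S.gT X (e 0) * t := by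
    intro X; rw [hTt, gTsmul']; ring
  have hgT0T : S.gT (e 0) S.T = t := by rw [gTT, g00]; ring
  have hgT1T : S.gT (e 1) S.T = 0 := by rw [gTT, g10]; ring
  have hgT2T : S.gT (e 2) S.T = 0 := by rw [gTT, g20]; ring
  have hgTT0 : S.gT S.T (e 0) = t := by rw [gTsymm]; exact hgT0T
  -- shape operator as bilinear form
  have shape' : ∀ (ξ : NM) (X Y : TM), S.gT (S.A ξ X) Y = S.gN (S.alpha X Y) ξ :=
    fun ξ X Y => S.shape ξ X Y
  -- A_H structure
  have AH0 : S.A H (e 0) = 0 := (hE0 (e 0)).mpr ⟨1, 0, by simp⟩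
  have AH1 : S.A H (e 1) = 0 := (hE0 (e 1)).mpr ⟨0, 1, by simp⟩
  have hab0 : ∀ j : Fin 3, S.gN (S.alpha (e 0) (e j)) H = 0 := by
    intro j; rw [← shape' H (e 0) (e j), AH0, gTzero]
  have hab1 : ∀ j : Fin 3, S.gN (S.alpha (e 1) (e j)) H = 0 := by
    intro j; rw [← shape' H (e 1) (e j), AH1, gTzero]
  have hab2j : ∀ j : Fin 3, j ≠ 2 → S.gN (S.alpha (e 2) (e j)) H = 0 := by
    intro j hj
    fin_cases j
    · rw [S.alpha_symm]; exact hab0 2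
    · rw [S.alpha_symm]; exact hab1 2
    · exact absurd rfl hj
  have hab22 : S.gN (S.alpha (e 2) (e 2)) H = 3 * S.gN H H := by
    have h3 := congrArg (fun ζ : NM => S.gN ζ H) hH
    simp only [Fin.sum_univ_three] at h3
    rw [gNsmul, gNadd, gNadd, hab0, hab1] at h3
    push_cast at h3
    linear_combination -h3
  have AH2 : S.A H (e 2) = (3 * S.gN H H) • e 2 := by
    have hx := expand (S.A H (e 2))
    rw [shape' H (e 2) (e 0), shape' H (e 2) (e 1), shape' H (e 2) (e 2)] at hx
    rw [hab2j 0 (by decide), hab2j 1 (by decide), hab22] at hx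
    rw [hx, zero_smul, zero_smul, zero_add, zero_add]
  have hreg : ∀ a : R, a * S.gN H H = 0 → a = 0 := by
    intro a ha
    have hA : S.A H (a • e 2) = 0 := by
      rw [map_smul, AH2, smul_smul,
        show a * (3 * S.gN H H) = (a * S.gN H H) * 3 by ring, ha, zero_mul, zero_smul]
    obtain ⟨c, d, hcd⟩ := (hE0 _).mp hA
    have h0 := congrArg (fun X : TM => S.gT X (e 2)) hcd
    simp only [gTadd, gTsmul, g02, g12, g22] at h0
    simpa using h0
  have hreg3 : ∀ a : R, a * (3 * S.gN H H) = 0 → a = 0 := by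
    intro a ha
    have h3 : a * 3 = 0 := hreg _ (by linear_combination ha)
    refine cancel 3 a (by norm_num) ?_
    rw [map_ofNat]
    linear_combination h3
  have treg : ∀ a : R, a * t = 0 → a = 0 := by
    intro a ha
    refine hT a ?_
    rw [hTt, smul_smul, ha, zero_smul]
  -- |H|^2 has zero derivative
  have acth : ∀ X : TM, S.act X (S.gN H H) = 0 := by
    intro X
    rw [mN, hpar X, gNzero, gNzero', add_zero]
  have act3h : ∀ X : TM, S.act X (3 * S.gN H H) = 0 := by
    intro X
    rw [S.act_mul, acth, mul_zero, zero_add,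
      show (3 : R) = algebraMap ℝ R 3 from (map_ofNat _ 3).symm, S.act_const, mul_zero]
  have hpar' : ∀ X : TM, S.nconn X H = 0 := hpar
  have nconn0 : ∀ X : TM, S.nconn X (0 : NM) = 0 := by
    intro X
    have h0 := S.nconn_smul X 0 0
    simpa [act0] using h0
  -- the key biconservativity consequence : gN H eta * t = 0
  have Rcurv_eq : ∀ Z W V : AM, S.Rcurv Z W V = prodCurv ε S.g S.dt Z W V :=
    fun _ _ _ => rfl
  have hRtan : ∀ (X V Y : TM) (ξ : NM),
      S.gT (S.tanPr (prodCurv ε S.g S.dt (S.ι X) (S.ν ξ) (S.ι V))) Y =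
        algebraMap ℝ R ε *
          ((0 - S.gN ξ S.eta * S.gT V S.T) * (S.gT X Y - S.gT X S.T * S.gT S.T Y)
            - (S.gT X V - S.gT X S.T * S.gT V S.T) * (0 - S.gN ξ S.eta * S.gT S.T Y)) := by
    intro X V Y ξ
    simp only [prodCurv, map_smul, map_sub, S.tan_ι, S.tan_ν, tpdt, gνι, gdtν, gdtι,
      gfold, gTsmul, gTsub, gTzero, smul_eq_mul]
    try ring
  have hterm0 :
      S.gT (S.tanPr (S.Rcurv (S.ι (e 0)) (S.ν H) (S.ι (e 0)))) (e 0) = 0 := by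
    rw [Rcurv_eq, hRtan, hgT0T, hgTT0, g00]
    ring
  have hterm1 :
      S.gT (S.tanPr (S.Rcurv (S.ι (e 1)) (S.ν H) (S.ι (e 1)))) (e 0) =
        algebraMap ℝ R ε * (S.gN H S.eta * t) := by
    rw [Rcurv_eq, hRtan, hgT1T, hgTT0, g10, g11]
    ring
  have hterm2 :
      S.gT (S.tanPr (S.Rcurv (S.ι (e 2)) (S.ν H) (S.ι (e 2)))) (e 0) =
        algebraMap ℝ R ε * (S.gN H S.eta * t) := by
    rw [Rcurv_eq, hRtan, hgT2T, hgTT0, g20, g22]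
    ring
  have hkt : S.gN H S.eta * t = 0 := by
    have hb := hbic (e 0)
    rw [Fin.sum_univ_three, Fin.sum_univ_three] at hb
    simp only [hpar', map_zero, LinearMap.zero_apply, gTzero, acth,
      hterm0, hterm1, hterm2] at hb
    refine cancel (8 * ε) _ ?_ ?_
    · rcases hε with h1 | h1 <;> rw [h1] <;> norm_num
    · rw [map_mul, map_ofNat]
      linear_combination hb
  have hktX : ∀ X : TM, S.gT X S.T * S.gN H S.eta = 0 := by
    intro X
    rw [gTT]
    linear_combination S.gT X (e 0) * hkt
  -- Codazzi paired with H
  have hRnorH : ∀ X Y Z : TM,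
      S.gN (S.norPr (prodCurv ε S.g S.dt (S.ι X) (S.ι Y) (S.ι Z))) H = 0 := by
    intro X Y Z
    simp only [prodCurv, map_smul, map_sub, S.nor_ι, npdt, gNsmul, gNsub, gNzero,
      smul_eq_mul, gfold, gdtι, gNetaH]
    linear_combination (algebraMap ℝ R ε * (S.gT X Z - S.gT X S.T * S.gT Z S.T)) * hktX Y
      - (algebraMap ℝ R ε * (S.gT Y Z - S.gT Y S.T * S.gT Z S.T)) * hktX X
  have mNH : ∀ (X : TM) (ξ : NM), S.gN (S.nconn X ξ) H = S.act X (S.gN ξ H) := by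
    intro X ξ
    have hm := mN X ξ H
    rw [hpar X, gNzero', add_zero] at hm
    exact hm.symm
  have codH : ∀ X Y Z : TM,
      S.act X (S.gN (S.alpha Y Z) H) - S.gN (S.alpha (S.conn X Y) Z) H
          - S.gN (S.alpha Y (S.conn X Z)) H
        = S.act Y (S.gN (S.alpha X Z) H) - S.gN (S.alpha (S.conn Y X) Z) H
          - S.gN (S.alpha X (S.conn Y Z)) H := by
    intro X Y Z
    have hc := congrArg (fun ζ : NM => S.gN ζ H) (S.codazzi (dt := S.dt) X Y Z)
    simp only [gNsub, mNH] at hc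
    rw [hRnorH X Y Z] at hc
    linear_combination hc
  have gNαX2 : ∀ X : TM, S.gN (S.alpha X (e 2)) H = S.gT X (e 2) * (3 * S.gN H H) := by
    intro X
    conv_lhs => rw [expand X]
    simp only [map_add, map_smul, LinearMap.add_apply, LinearMap.smul_apply,
      gNadd, gNsmul]
    rw [hab0, hab1, hab22]
    ring
  have gNαXj : ∀ (X : TM) (j : Fin 3), j ≠ 2 → S.gN (S.alpha X (e j)) H = 0 := by
    intro X j hj
    conv_lhs => rw [expand X]
    simp only [map_add, map_smul, LinearMap.add_apply, LinearMap.smul_apply,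
      gNadd, gNsmul]
    rw [hab0, hab1, hab2j j hj]
    ring
  have key1 : ∀ i j : Fin 3, i ≠ 2 → j ≠ 2 →
      S.gT (S.conn (e i) (e j)) (e 2) = 0 := by
    intro i j hi hj
    have hc := codH (e i) (e 2) (e j)
    rw [hab2j j hj, act0, gNαXj _ j hj, S.alpha_symm (e 2), gNαX2,
      gNαXj (e i) j hj, act0, gNαXj _ j hj, S.alpha_symm (e i), gNαXj _ i hi] at hc
    exact hreg3 _ (by linear_combination -hc)
  have key2 : ∀ j : Fin 3, j ≠ 2 → S.gT (S.conn (e 2) (e j)) (e 2) = 0 := by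
    intro j hj
    have hc := codH (e j) (e 2) (e 2)
    rw [hab22, act3h, gNαX2 (S.conn (e j) (e 2)), Γdiag,
      S.alpha_symm (e 2) (S.conn (e j) (e 2)), gNαX2 (S.conn (e j) (e 2)), Γdiag,
      gNαX2 (e j), he.1, if_neg hj, S.alpha_symm (e j) (S.conn (e 2) (e 2)),
      gNαXj _ j hj, gNαX2 (S.conn (e 2) (e j))] at hc
    rw [zero_mul, act0] at hc
    exact hreg3 _ (by linear_combination hc)
  have Z002 : S.gT (S.conn (e 0) (e 0)) (e 2) = 0 := key1 0 0 (by decide) (by decide)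
  have Z012 : S.gT (S.conn (e 0) (e 1)) (e 2) = 0 := key1 0 1 (by decide) (by decide)
  have Z102 : S.gT (S.conn (e 1) (e 0)) (e 2) = 0 := key1 1 0 (by decide) (by decide)
  have Z112 : S.gT (S.conn (e 1) (e 1)) (e 2) = 0 := key1 1 1 (by decide) (by decide)
  have Z202 : S.gT (S.conn (e 2) (e 0)) (e 2) = 0 := key2 0 (by decide)
  have Z212 : S.gT (S.conn (e 2) (e 1)) (e 2) = 0 := key2 1 (by decide)
  -- Ricci equation with xi = H gives alpha(e1, e2) ⟂ ξ₂
  have hpc : prodCurv ε S.g S.dt (S.ι (e 1)) (S.ι (e 2)) (S.ν H) = 0 := by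
    have c1 : S.g (S.ι (e 2)) (S.ν H) - S.g (S.ι (e 2)) S.dt * S.g (S.ν H) S.dt = 0 := by
      rw [gιν, gdtι, hgT2T]; ring
    have c2 : S.g (S.ι (e 1)) (S.ν H) - S.g (S.ι (e 1)) S.dt * S.g (S.ν H) S.dt = 0 := by
      rw [gιν, gdtι, hgT1T]; ring
    rw [prodCurv, c1, c2, zero_smul, zero_smul, sub_zero, smul_zero]
  have b12 : S.gN (S.alpha (e 1) (e 2)) ξ₂ = 0 := by
    have hr := S.ricci (dt := S.dt) (e 1) (e 2) H
    rw [hpar, hpar, hpar, nconn0, nconn0, AH1, AH2, hpc, map_zero] at hr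
    simp only [map_zero, LinearMap.zero_apply, map_smul, sub_zero, zero_add,
      zero_sub, sub_self, neg_eq_zero] at hr
    have hsm : (3 * S.gN H H) • S.alpha (e 1) (e 2) = 0 := by
      rw [← hr]
    have h0 := congrArg (fun ζ : NM => S.gN ζ ξ₂) hsm
    simp only [gNsmul, gNzero] at h0
    exact hreg3 _ (by linear_combination h0)
  -- dt parallel : conn X T = A eta X
  have h1 : ∀ X : TM, S.conn X S.T = S.A S.eta X := by
    intro X
    have h0 := S.dt_parallel X
    rw [← hdt, S.D_add, S.gauss, S.weingarten] at h0
    have h2 := congrArg S.tanPr h0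
    simp only [map_add, map_neg, map_zero, S.tan_ι, S.tan_ν, add_zero] at h2
    have h3 : S.conn X S.T - S.A S.eta X = 0 := by
      rw [sub_eq_add_neg]
      exact h2
    exact sub_eq_zero.mp h3
  have Z201 : S.gT (S.conn (e 2) (e 0)) (e 1) = 0 := by
    have hc2 := h1 (e 2)
    rw [hTt, hetadec, S.conn_smul, map_smul] at hc2
    have h0 := congrArg (fun X : TM => S.gT X (e 1)) hc2
    simp only [LinearMap.smul_apply, gTadd, gTsmul] at h0
    rw [g01, shape' ξ₂ (e 2) (e 1), S.alpha_symm, b12] at h0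
    exact treg _ (by linear_combination h0)
  -- assemble
  refine ⟨S.gT (S.conn (e 0) (e 0)) (e 1), S.gT (S.conn (e 1) (e 0)) (e 1),
    ?_, ?_, ?_, ?_, ?_, ?_, ?_, ?_⟩
  · conv_lhs => rw [expand (S.conn (e 0) (e 0))]
    rw [Γdiag 0 0, Z002, zero_smul, zero_smul, zero_add, add_zero]
  · conv_lhs => rw [expand (S.conn (e 0) (e 1))]
    rw [Γanti 0 1 0, Γdiag 0 1, Z012, zero_smul, zero_smul, add_zero, add_zero,
      neg_smul]
  · conv_lhs => rw [expand (S.conn (e 1) (e 0))]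
    rw [Γdiag 1 0, Z102, zero_smul, zero_smul, zero_add, add_zero]
  · conv_lhs => rw [expand (S.conn (e 1) (e 1))]
    rw [Γanti 1 1 0, Γdiag 1 1, Z112, zero_smul, zero_smul, add_zero, add_zero,
      neg_smul]
  have Zc0 : ∀ i : Fin 3, S.gT (S.conn (e i) (e 0)) (e 2) = 0 := by
    intro i
    by_cases hi : i = 2
    · subst hi; exact Z202
    · exact key1 i 0 hi (by decide)
  have Zc1 : ∀ i : Fin 3, S.gT (S.conn (e i) (e 1)) (e 2) = 0 := by
    intro i
    by_cases hi : i = 2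
    · subst hi; exact Z212
    · exact key1 i 1 hi (by decide)
  · intro i
    conv_lhs => rw [expand (S.conn (e i) (e 2))]
    rw [Γanti i 2 0, Γanti i 2 1, Γdiag i 2, Zc0 i, Zc1 i]
    simp
  · conv_lhs => rw [expand (S.conn (e 2) (e 0))]
    rw [Γdiag 2 0, Z201, Z202]; simp
  · conv_lhs => rw [expand (S.conn (e 2) (e 1))]
    rw [Γanti 2 1 0, Z201, Z212, Γdiag 2 1]; simp
  · conv_lhs => rw [expand (S.conn (e 2) (e 2))]
    rw [Γanti 2 2 0, Γanti 2 2 1, Z202, Z212, Γdiag 2 2]; simp
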